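/- Let ω be a smooth differential p-form on an open set U ⊆ ℝⁿ that has constant coefficients on a neighbourhood of a point x ∈ U. Then ω is closed on a neighbourhood of x, i.e. dω = 0 on some open neighbourhood of x. -/
import Mathlib



private lemma insertNth_eq_cons_comp {q : ℕ} {α : Type*} (k : Fin (q+1)) (w : α) (r : Fin q → α) :
    Fin.insertNth k w r = (Fin.cons w r) ∘ (Fin.cycleRange k) := by
  funext t
  rcases eq_or_ne t k with rfl | h
  · simp [Fin.cycleRange_self]
  · obtain ⟨s, rfl⟩ := Fin.exists_succAbove_eq h
    simp [Fin.cycleRange_succAbove]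

private lemma alt_insert {q n : ℕ} (c : (Fin n → ℝ) [×(q+1)]→L[ℝ] ℝ)
    (hc : ∀ w : Fin (q+1) → (Fin n → ℝ), ∀ a b, a ≠ b → w a = w b → c w = 0)
    (k : Fin (q+1)) (w : Fin n → ℝ) (r : Fin q → (Fin n → ℝ)) :
    c (Fin.insertNth k w r) = (-1:ℝ)^(k:ℕ) * c (Fin.cons w r) := by
  let calt : (Fin n → ℝ) [⋀^Fin (q+1)]→ₗ[ℝ] ℝ :=
    { toMultilinearMap := c.toMultilinearMap
      map_eq_zero_of_eq' := fun v i j hv hij => hc v i j hij hv }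
  have hcalt : ∀ v, c v = calt v := fun _ => rfl
  rw [insertNth_eq_cons_comp, hcalt, hcalt, AlternatingMap.map_perm, Fin.sign_cycleRange]
  simp [Units.smul_def]

private lemma val_succAbove {p : ℕ} (i : Fin (p+1)) (k : Fin p) :
    (i.succAbove k : ℕ) = if (k:ℕ) < (i:ℕ) then (k:ℕ) else (k:ℕ)+1 := by
  rw [Fin.succAbove]
  rcases lt_or_ge ((k:ℕ)) ((i:ℕ)) with h | h
  · rw [if_pos (by simpa [Fin.lt_def] using h), if_pos h]; simp
  · rw [if_neg (by simp [Fin.lt_def]; omega), if_neg (not_lt.2 h)]; simp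

private lemma neg_one_pow_sum {x y : ℕ} (h : (x + y) % 2 = 1) : (-1:ℝ)^x + (-1:ℝ)^y = 0 := by
  rcases Nat.even_or_odd x with hx | hx
  · rw [Even.neg_one_pow hx, Odd.neg_one_pow (by rw [Nat.odd_iff]; rw [Nat.even_iff] at hx; omega)]
    ring
  · rw [Odd.neg_one_pow hx, Even.neg_one_pow (by rw [Nat.even_iff]; rw [Nat.odd_iff] at hx; omega)]
    ring

private lemma pair_cancel {n q : ℕ} (c : (Fin n → ℝ) [×(q+1)]→L[ℝ] ℝ)
    (hc : ∀ w : Fin (q+1) → (Fin n → ℝ), ∀ a b, a ≠ b → w a = w b → c w = 0)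
    (G : Fin (q+2) → (Fin n → ℝ)) (w : Fin n → ℝ)
    (i j : Fin (q+2)) (k m : Fin (q+1))
    (hj : j = i.succAbove k) (hi : i = j.succAbove m)
    (hsign : (-1:ℝ)^((i:ℕ)+(k:ℕ)) + (-1:ℝ)^((j:ℕ)+(m:ℕ)) = 0) :
    (-1:ℝ)^(i:ℕ) * c (Function.update (fun t => G (i.succAbove t)) k w)
      + (-1:ℝ)^(j:ℕ) * c (Function.update (fun t => G (j.succAbove t)) m w) = 0 := by
  have e1 : Function.update (fun t => G (i.succAbove t)) k w
      = Fin.insertNth k w (fun t => G (i.succAbove (k.succAbove t))) := by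
    rw [show (fun t : Fin q => G (i.succAbove (k.succAbove t)))
        = Fin.removeNth k (fun t => G (i.succAbove t)) from rfl,
      Fin.insertNth_removeNth]
  have e2 : Function.update (fun t => G (j.succAbove t)) m w
      = Fin.insertNth m w (fun t => G (j.succAbove (m.succAbove t))) := by
    rw [show (fun t : Fin q => G (j.succAbove (m.succAbove t)))
        = Fin.removeNth m (fun t => G (j.succAbove t)) from rfl,
      Fin.insertNth_removeNth]
  have hj' : (j:ℕ) = if (k:ℕ) < (i:ℕ) then (k:ℕ) else (k:ℕ)+1 := by
    rw [hj]; exact val_succAbove i k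
  have hi' : (i:ℕ) = if (m:ℕ) < (j:ℕ) then (m:ℕ) else (m:ℕ)+1 := by
    conv_lhs => rw [hi]
    exact val_succAbove j m
  have hGG : (fun t : Fin q => G (i.succAbove (k.succAbove t)))
      = (fun t => G (j.succAbove (m.succAbove t))) := by
    funext t
    refine congrArg G (Fin.ext ?_)
    rw [val_succAbove, val_succAbove, val_succAbove, val_succAbove]
    split_ifs at * <;> omega
  rw [e1, e2, hGG, alt_insert c hc, alt_insert c hc]
  linear_combination (c (Fin.cons w (fun t => G (j.succAbove (m.succAbove t))))) * hsign

private lemma aux_cancel {n p : ℕ} (c : (Fin n → ℝ) [×p]→L[ℝ] ℝ)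
    (hc : ∀ w : Fin p → (Fin n → ℝ), ∀ a b, a ≠ b → w a = w b → c w = 0)
    (G : Fin (p+1) → (Fin n → ℝ)) (S : Fin (p+1) → Fin (p+1) → (Fin n → ℝ))
    (hS : ∀ i j, S i j = S j i) :
    ∑ i : Fin (p+1), ((-1:ℝ)^(i:ℕ) *
      ∑ k : Fin p, c (Function.update (fun t => G (i.succAbove t)) k (S i (i.succAbove k)))) = 0 := by
  rcases p with _ | q
  · simp
  have hsum : (∑ i : Fin (q+1+1), ((-1:ℝ)^(i:ℕ) *
      ∑ k : Fin (q+1), c (Function.update (fun t => G (i.succAbove t)) k (S i (i.succAbove k)))))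
      = ∑ a : Fin (q+2) × Fin (q+1), (-1:ℝ)^(a.1:ℕ) *
          c (Function.update (fun t => G (a.1.succAbove t)) a.2 (S a.1 (a.1.succAbove a.2))) := by
    rw [Fintype.sum_prod_type]
    exact Finset.sum_congr rfl fun i _ => Finset.mul_sum _ _ _
  rw [hsum]
  refine Finset.sum_ninvolution
    (fun a => (a.1.succAbove a.2,
      if _h : (a.2:ℕ) < (a.1:ℕ) then (⟨(a.1:ℕ)-1, by have := a.1.isLt; omega⟩ : Fin (q+1))
      else ⟨(a.1:ℕ), by have := a.2.isLt; omega⟩)) ?_ ?_ (fun _ => Finset.mem_univ _) ?_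
  · rintro ⟨i, k⟩
    dsimp only
    by_cases hik : (k:ℕ) < (i:ℕ)
    · rw [dif_pos hik]
      have hjv : ((i.succAbove k : Fin (q+2)) : ℕ) = (k:ℕ) := by
        rw [val_succAbove, if_pos hik]
      have hieq : i = (i.succAbove k).succAbove ⟨(i:ℕ)-1, by have := i.isLt; omega⟩ := by
        apply Fin.ext
        rw [val_succAbove]
        simp only [hjv]
        split_ifs <;> omega
      rw [show S (i.succAbove k) ((i.succAbove k).succAbove ⟨(i:ℕ)-1, by have := i.isLt; omega⟩)
            = S i (i.succAbove k) from by rw [← hieq, hS]]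
      exact pair_cancel c hc G _ i (i.succAbove k) k _ rfl hieq
        (neg_one_pow_sum (by simp only [hjv, Fin.val_mk]; omega))
    · rw [dif_neg hik]
      have hjv : ((i.succAbove k : Fin (q+2)) : ℕ) = (k:ℕ)+1 := by
        rw [val_succAbove, if_neg hik]
      have hieq : i = (i.succAbove k).succAbove ⟨(i:ℕ), by have := k.isLt; omega⟩ := by
        apply Fin.ext
        rw [val_succAbove]
        simp only [hjv]
        split_ifs <;> omega
      rw [show S (i.succAbove k) ((i.succAbove k).succAbove ⟨(i:ℕ), by have := k.isLt; omega⟩)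
            = S i (i.succAbove k) from by rw [← hieq, hS]]
      exact pair_cancel c hc G _ i (i.succAbove k) k _ rfl hieq
        (neg_one_pow_sum (by simp only [hjv, Fin.val_mk]; omega))
  · rintro ⟨i, k⟩ - h
    exact Fin.succAbove_ne i k (congrArg Prod.fst h)
  · rintro ⟨i, k⟩
    dsimp only
    by_cases hik : (k:ℕ) < (i:ℕ)
    · rw [dif_pos hik]
      have hjv : ((i.succAbove k : Fin (q+2)) : ℕ) = (k:ℕ) := by
        rw [val_succAbove, if_pos hik]
      have h2 : ¬ (((⟨(i:ℕ)-1, by have := i.isLt; omega⟩ : Fin (q+1)) : ℕ)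
          < ((i.succAbove k : Fin (q+2)) : ℕ)) := by simp only [hjv, Fin.val_mk]; omega
      rw [dif_neg h2]
      refine Prod.ext ?_ ?_
      · show (i.succAbove k).succAbove _ = i
        apply Fin.ext
        rw [val_succAbove]
        simp only [hjv]
        split_ifs <;> omega
      · show (⟨((i.succAbove k : Fin (q+2)) : ℕ), _⟩ : Fin (q+1)) = k
        apply Fin.ext
        simp only [hjv, Fin.val_mk] <;> omega
    · rw [dif_neg hik]
      have hjv : ((i.succAbove k : Fin (q+2)) : ℕ) = (k:ℕ)+1 := by
        rw [val_succAbove, if_neg hik]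
      have h2 : (((⟨(i:ℕ), by have := k.isLt; omega⟩ : Fin (q+1)) : ℕ)
          < ((i.succAbove k : Fin (q+2)) : ℕ)) := by simp only [hjv, Fin.val_mk]; omega
      rw [dif_pos h2]
      refine Prod.ext ?_ ?_
      · show (i.succAbove k).succAbove _ = i
        apply Fin.ext
        rw [val_succAbove]
        simp only [hjv]
        split_ifs <;> omega
      · show (⟨((i.succAbove k : Fin (q+2)) : ℕ) - 1, _⟩ : Fin (q+1)) = k
        apply Fin.ext
        simp only [hjv, Fin.val_mk] <;> omega
/-- A smooth differential `p`-form on (an open subset of) `ℝⁿ`, modelled as a map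
assigning to each point a continuous `p`-multilinear map `(ℝⁿ)ᵖ → ℝ`
(the alternating property is stated as a separate hypothesis where needed),
has *constant coefficients* on a neighbourhood of `x` if there are an open
neighbourhood `V ⊆ U` of `x`, a `C^∞` diffeomorphism `u` from `V` onto an open
subset of `ℝⁿ` and a constant `p`-multilinear map `c` such that
`ω_y (v₁, …, v_p) = c (Du_y v₁, …, Du_y v_p)` on `V`. -/
def HasConstantCoefficientsFormAt (n p : ℕ) (U : Set (Fin n → ℝ))
    (ω : (Fin n → ℝ) → ((Fin n → ℝ) [×p]→L[ℝ] ℝ)) (x : Fin n → ℝ) : Prop :=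
  ∃ V : Set (Fin n → ℝ), IsOpen V ∧ x ∈ V ∧ V ⊆ U ∧
    ∃ u : (Fin n → ℝ) → (Fin n → ℝ),
      ContDiffOn ℝ (⊤ : ℕ∞) u V ∧ Set.InjOn u V ∧ IsOpen (u '' V) ∧
      (∀ y ∈ V, Function.Bijective (fderiv ℝ u y)) ∧
      ∃ c : (Fin n → ℝ) [×p]→L[ℝ] ℝ,
        ∀ y ∈ V, ∀ v : Fin p → (Fin n → ℝ),
          ω y v = c (fun i => fderiv ℝ u y (v i))

/-- a smooth `p`-form with constant coefficients on a neighbourhood of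
`x ∈ U` is closed on a neighbourhood of `x`:
`dω_y(v₀,…,v_p) = Σᵢ (−1)ⁱ (Dω_y(vᵢ))(v₀,…,v̂ᵢ,…,v_p) = 0` near `x`. -/
theorem constantCoefficients_closed (n p : ℕ) (U : Set (Fin n → ℝ)) (hU : IsOpen U)
    (ω : (Fin n → ℝ) → ((Fin n → ℝ) [×p]→L[ℝ] ℝ))
    (hω : ContDiffOn ℝ (⊤ : ℕ∞) ω U)
    (halt : ∀ y ∈ U, ∀ v : Fin p → (Fin n → ℝ), ∀ i j, i ≠ j → v i = v j → ω y v = 0)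
    (x : Fin n → ℝ) (hx : x ∈ U)
    (hcc : HasConstantCoefficientsFormAt n p U ω x) :
    ∃ W : Set (Fin n → ℝ), IsOpen W ∧ x ∈ W ∧
      ∀ y ∈ W, ∀ v : Fin (p + 1) → (Fin n → ℝ),
        ∑ i : Fin (p + 1),
          (-1 : ℝ) ^ (i : ℕ) * fderiv ℝ ω y (v i) (fun j => v (i.succAbove j)) = 0 := by

  obtain ⟨V, hV, hxV, hVU, u, hu, -, -, hbij, c, hωc⟩ := hcc
  -- `c` is alternating
  have hc : ∀ w : Fin p → (Fin n → ℝ), ∀ a b, a ≠ b → w a = w b → c w = 0 := by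
    intro w a b hab hwab
    have hbijx : Function.Bijective ((fderiv ℝ u x).toLinearMap) := hbij x hxV
    let e := LinearEquiv.ofBijective (fderiv ℝ u x).toLinearMap hbijx
    have happ : ∀ i : Fin p, fderiv ℝ u x (e.symm (w i)) = w i := fun i =>
      e.apply_symm_apply (w i)
    have h1 := hωc x hxV (fun i => e.symm (w i))
    rw [show (fun i => fderiv ℝ u x (e.symm (w i))) = w from funext happ] at h1
    rw [← h1]
    exact halt x hx _ a b hab (congrArg e.symm hwab)
  have hω' : ∀ y ∈ V, DifferentiableAt ℝ ω y := fun y hy =>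
    (hω.differentiableOn (by simp) y (hVU hy)).differentiableAt (hU.mem_nhds (hVU hy))
  have huD : ∀ y ∈ V, DifferentiableAt ℝ u y := fun y hy =>
    (hu.differentiableOn (by simp) y hy).differentiableAt (hV.mem_nhds hy)
  have hgC : ContDiffOn ℝ (⊤ : ℕ∞) (fderiv ℝ u) V := hu.fderiv_of_isOpen hV (by simp)
  have hgD : ∀ y ∈ V, DifferentiableAt ℝ (fderiv ℝ u) y := fun y hy =>
    (hgC.differentiableOn (by simp) y hy).differentiableAt (hV.mem_nhds hy)
  -- the key formula for the derivative of ω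
  have key : ∀ y ∈ V, ∀ (w : Fin n → ℝ) (a : Fin p → (Fin n → ℝ)),
      fderiv ℝ ω y w a = ∑ k : Fin p, c (Function.update (fun t => fderiv ℝ u y (a t)) k
        (fderiv ℝ (fderiv ℝ u) y w (a k))) := by
    intro y hy w a
    have h1 : fderiv ℝ ω y w a = fderiv ℝ (fun z => ω z a) y w := by
      have hP : HasFDerivAt (fun z => ω z a)
          ((ContinuousMultilinearMap.apply ℝ (fun _ : Fin p => (Fin n → ℝ)) ℝ a).comp
            (fderiv ℝ ω y)) y :=
        (ContinuousMultilinearMap.apply ℝ (fun _ : Fin p => (Fin n → ℝ)) ℝ a).hasFDerivAt.comp y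
          (hω' y hy).hasFDerivAt
      rw [hP.fderiv]
      rfl
    have hg := (hgD y hy).hasFDerivAt
    have hΦ : HasFDerivAt (fun z => (fun t : Fin p => fderiv ℝ u z (a t)))
        (ContinuousLinearMap.pi fun t => ((fderiv ℝ (fderiv ℝ u) y).flip (a t))) y := by
      apply hasFDerivAt_pi.2
      intro t
      have := hg.clm_apply (hasFDerivAt_const (a t) y)
      simpa using this
    have h2 : HasFDerivAt (fun z => c (fun t : Fin p => fderiv ℝ u z (a t)))
        ((c.linearDeriv (fun t => fderiv ℝ u y (a t))).comp
          (ContinuousLinearMap.pi fun t => ((fderiv ℝ (fderiv ℝ u) y).flip (a t)))) y :=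
      (ContinuousMultilinearMap.hasFDerivAt c _).comp y hΦ
    have heq : (fun z => ω z a) =ᶠ[nhds y] (fun z => c (fun t => fderiv ℝ u z (a t))) :=
      Filter.eventuallyEq_of_mem (hV.mem_nhds hy) (fun z hz => hωc z hz a)
    rw [h1, heq.fderiv_eq, h2.fderiv]
    simp [ContinuousMultilinearMap.linearDeriv_apply]
  -- symmetry of the second derivative
  have hsymm : ∀ y ∈ V, ∀ v w, fderiv ℝ (fderiv ℝ u) y v w = fderiv ℝ (fderiv ℝ u) y w v := by
    intro y hy v w
    apply second_derivative_symmetric_of_eventually (f := u) ?_ (hgD y hy).hasFDerivAt v w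
    exact Filter.eventually_of_mem (hV.mem_nhds hy) (fun z hz => (huD z hz).hasFDerivAt)
  refine ⟨V, hV, hxV, fun y hy v => ?_⟩
  calc ∑ i : Fin (p+1), (-1:ℝ)^(i:ℕ) * fderiv ℝ ω y (v i) (fun j => v (i.succAbove j))
      = ∑ i : Fin (p+1), ((-1:ℝ)^(i:ℕ) *
        ∑ k : Fin p, c (Function.update
          (fun t => (fun s => fderiv ℝ u y (v s)) (i.succAbove t)) k
          ((fun s s' => fderiv ℝ (fderiv ℝ u) y (v s) (v s')) i (i.succAbove k)))) :=
        Finset.sum_congr rfl fun i _ => by rw [key y hy (v i) (fun j => v (i.succAbove j))]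
    _ = 0 := aux_cancel c hc (fun s => fderiv ℝ u y (v s))
        (fun s s' => fderiv ℝ (fderiv ℝ u) y (v s) (v s'))
        (fun s s' => hsymm y hy (v s) (v s'))
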